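/- Let G be a meromorphic-type function with simple zeros (z_n) and simple poles (p_n) as in the context, with 0 neither a zero nor a pole. If there is a constant C > 0 such that for every N, |G'(ω)/G(ω)| ≤ C/R_N for all ω with |ω| = R_N, then the sequence S_N := ∑_{n : |p_n| < R_N} 1/p_n − ∑_{n : |z_n| < R_N} 1/z_n converges as N → ∞, and its limit equals G'(0)/G(0). -/

import Mathlib

open Complex Filter Topology Metric

lemma aux_isolated (p : ℕ → ℂ)
    (hpfin : ∀ r : ℝ, {n : ℕ | ‖p n‖ < r}.Finite) (a : ℂ) :
    ∃ ε > 0, ∀ w ∈ Metric.ball a ε, w ≠ a → w ∉ Set.range p := by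
  classical
  set K : Set ℂ := (p '' {n | ‖p n‖ < ‖a‖ + 1}) \ {a} with hK
  have hKfin : K.Finite := (((hpfin _).image p).diff)
  have haK : a ∉ K := fun h => h.2 rfl
  obtain ⟨ε₁, hε₁, hball⟩ := Metric.isOpen_iff.1 hKfin.isClosed.isOpen_compl a haK
  refine ⟨min ε₁ 1, by positivity, ?_⟩
  rintro w hw hne ⟨n, rfl⟩
  have hd : dist (p n) a < min ε₁ 1 := mem_ball.1 hw
  have h1 : ‖p n‖ < ‖a‖ + 1 := by
    have : dist (p n) a < 1 := lt_of_lt_of_le hd (min_le_right _ _)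
    have h2 : ‖p n - a‖ < 1 := by rwa [Complex.dist_eq] at this
    calc ‖p n‖ = ‖a + (p n - a)‖ := by ring_nf
      _ ≤ ‖a‖ + ‖p n - a‖ := norm_add_le _ _
      _ < ‖a‖ + 1 := by linarith
  have : p n ∈ K := ⟨⟨n, h1, rfl⟩, hne⟩
  exact hball (mem_ball.2 (lt_of_lt_of_le hd (min_le_left _ _))) this

lemma aux_isOpen_compl (p : ℕ → ℂ)
    (hpfin : ∀ r : ℝ, {n : ℕ | ‖p n‖ < r}.Finite) :
    IsOpen (Set.range p)ᶜ := by
  rw [Metric.isOpen_iff]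
  intro a ha
  obtain ⟨ε, hε, h⟩ := aux_isolated p hpfin a
  refine ⟨ε, hε, fun w hw hmem => ?_⟩
  rcases eq_or_ne w a with rfl | hne
  · exact ha hmem
  · exact h w hw hne hmem

lemma aux_deriv_diff {f : ℂ → ℂ} {U : Set ℂ} (hU : IsOpen U)
    (hd : DifferentiableOn ℂ f U) {x : ℂ} (hx : x ∈ U) :
    DifferentiableAt ℂ (deriv f) x := by
  have h2 : ContDiffOn ℂ 2 f U := hd.contDiffOn hU
  have h1 : ContDiffOn ℂ 1 (deriv f) U := h2.deriv_of_isOpen hU (by norm_num)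
  exact (h1.differentiableOn (by norm_num)).differentiableAt (hU.mem_nhds hx)

lemma aux_circleIntegrable_sum {ι : Type*} (s : Finset ι) (f : ι → ℂ → ℂ) (c : ℂ) (R : ℝ)
    (h : ∀ i ∈ s, CircleIntegrable (f i) c R) :
    CircleIntegrable (fun w => ∑ i ∈ s, f i w) c R := by
  classical
  induction s using Finset.induction_on with
  | empty => simpa using circleIntegrable_const (0 : ℂ) c R
  | @insert i s hi ih =>
    have := (h i (Finset.mem_insert_self i s)).add
      (ih fun j hj => h j (Finset.mem_insert_of_mem hj))
    simp only [Finset.sum_insert hi]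
    exact this

lemma aux_circleIntegral_add {f g : ℂ → ℂ} {c : ℂ} {R : ℝ} (hf : CircleIntegrable f c R)
    (hg : CircleIntegrable g c R) :
    (∮ z in C(c, R), f z + g z) = (∮ z in C(c, R), f z) + ∮ z in C(c, R), g z := by
  simp only [circleIntegral, smul_add, intervalIntegral.integral_add hf.out hg.out]

lemma aux_circleIntegral_sum {ι : Type*} (s : Finset ι) (f : ι → ℂ → ℂ) (c : ℂ) (R : ℝ)
    (h : ∀ i ∈ s, CircleIntegrable (f i) c R) :
    (∮ w in C(c, R), ∑ i ∈ s, f i w) = ∑ i ∈ s, ∮ w in C(c, R), f i w := by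
  classical
  induction s using Finset.induction_on with
  | empty =>
    simp only [Finset.sum_empty]
    simpa using circleIntegral.integral_const_mul 0 (fun _ => (1:ℂ)) c R
  | @insert i s hi ih =>
    have hadd := aux_circleIntegral_add (h i (Finset.mem_insert_self i s))
      (aux_circleIntegrable_sum s f c R fun j hj => h j (Finset.mem_insert_of_mem hj))
    rw [Finset.sum_insert hi, ← ih fun j hj => h j (Finset.mem_insert_of_mem hj), ← hadd]
    congr 1
    ext w
    simp [Finset.sum_insert hi]

theorem aux_residue {R : ℝ} (hR : 0 < R) (s : Finset ℂ) (f c : ℂ → ℂ)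
    (hs : ∀ a ∈ s, a ∈ Metric.ball (0:ℂ) R)
    (hf : ∀ w ∈ Metric.closedBall (0:ℂ) R, w ∉ s → DifferentiableAt ℂ f w)
    (hres : ∀ a ∈ s, Tendsto (fun w => (w - a) * f w) (𝓝[≠] a) (𝓝 (c a))) :
    (∮ w in C(0, R), f w) = (2 * Real.pi * Complex.I) * ∑ a ∈ s, c a := by
  classical
  set g : ℂ → ℂ := fun w => f w - ∑ a ∈ s, c a * (w - a)⁻¹ with hgdef
  have hgd : ∀ w ∈ Metric.closedBall (0:ℂ) R, w ∉ s → DifferentiableAt ℂ g w := by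
    intro w hw hws
    apply (hf w hw hws).sub
    apply DifferentiableAt.fun_sum
    intro b hb
    have hwb : w - b ≠ 0 := sub_ne_zero.2 fun h => hws (h ▸ hb)
    exact (differentiableAt_const _).mul ((differentiableAt_id.sub_const b).inv hwb)
  have key : ∀ a ∈ s, ∃ t : Set ℂ, IsOpen t ∧ a ∈ t ∧ t ⊆ Metric.ball (0:ℂ) R ∧
      (∀ b ∈ s, b ∈ t → b = a) := by
    intro a ha
    have hcl : IsClosed ((↑s : Set ℂ) \ {a}) :=
      (s.finite_toSet.subset Set.diff_subset).isClosed
    refine ⟨Metric.ball (0:ℂ) R \ ((↑s : Set ℂ) \ {a}), Metric.isOpen_ball.sdiff hcl,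
      ⟨hs a ha, fun hmem => hmem.2 rfl⟩, Set.diff_subset, ?_⟩
    intro b hb hbt
    by_contra hne
    exact hbt.2 ⟨hb, hne⟩
  have hgt : ∀ a ∈ s, Tendsto (fun w => (w - a) * g w) (𝓝[≠] a) (𝓝 0) := by
    intro a ha
    have h1 : Tendsto (fun w => ((w - a) * f w - c a) -
        ∑ b ∈ s.erase a, c b * ((w - a) * (w - b)⁻¹))
        (𝓝[≠] a) (𝓝 ((c a - c a) - ∑ b ∈ s.erase a, c b * ((a - a) * (a - b)⁻¹))) := by
      refine ((hres a ha).sub tendsto_const_nhds).sub ?_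
      refine tendsto_finset_sum _ fun b hb => ?_
      have hab : a - b ≠ 0 := sub_ne_zero.2 fun h => (Finset.ne_of_mem_erase hb) h.symm
      have hc : ContinuousAt (fun w => c b * ((w - a) * (w - b)⁻¹)) a := by
        apply continuousAt_const.mul
        exact ((continuousAt_id.sub continuousAt_const).mul
          ((continuousAt_id.sub continuousAt_const).inv₀ hab))
      exact hc.continuousWithinAt.tendsto
    have h2 : ((c a - c a) - ∑ b ∈ s.erase a, c b * ((a - a) * (a - b)⁻¹)) = 0 := by
      simp
    rw [h2] at h1
    refine h1.congr' ?_
    filter_upwards [self_mem_nhdsWithin] with w hw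
    have hwa : w - a ≠ 0 := sub_ne_zero.2 hw
    have hsplit : ∑ b ∈ s, c b * ((w - a) * (w - b)⁻¹) =
        ∑ b ∈ s.erase a, c b * ((w - a) * (w - b)⁻¹) + c a * ((w - a) * (w - a)⁻¹) :=
      (Finset.sum_erase_add s _ ha).symm
    have hone : (w - a) * (w - a)⁻¹ = 1 := mul_inv_cancel₀ hwa
    calc ((w - a) * f w - c a) - ∑ b ∈ s.erase a, c b * ((w - a) * (w - b)⁻¹)
        = (w - a) * f w - (∑ b ∈ s.erase a, c b * ((w - a) * (w - b)⁻¹)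
            + c a * ((w - a) * (w - a)⁻¹)) := by rw [hone]; ring
      _ = (w - a) * f w - ∑ b ∈ s, c b * ((w - a) * (w - b)⁻¹) := by rw [hsplit]
      _ = (w - a) * g w := by
          rw [hgdef]
          simp only [mul_sub, Finset.mul_sum]
          congr 1
          refine Finset.sum_congr rfl fun b _ => by ring
  have ho : ∀ a ∈ s, (fun w => g w - g a) =o[𝓝[≠] a] fun w => (w - a)⁻¹ := by
    intro a ha
    rw [Asymptotics.isLittleO_iff_tendsto']
    · have hga : Tendsto (fun w => (w - a) * g a) (𝓝[≠] a) (𝓝 0) := by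
        have : ContinuousAt (fun w => (w - a) * g a) a :=
          (continuousAt_id.sub continuousAt_const).mul continuousAt_const
        have h0 : (a - a) * g a = 0 := by rw [sub_self, zero_mul]
        simpa [h0] using this.continuousWithinAt.tendsto
      have := (hgt a ha).sub hga
      rw [sub_zero] at this
      refine this.congr' ?_
      filter_upwards [self_mem_nhdsWithin] with w hw
      have hwa : w - a ≠ 0 := sub_ne_zero.2 hw
      field_simp
    · filter_upwards [self_mem_nhdsWithin] with w hw h0
      exact absurd h0 (inv_ne_zero (sub_ne_zero.2 hw))
  set G : ℂ → ℂ := fun w => if w ∈ s then limUnder (𝓝[≠] w) g else g w with hGdef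
  have hGeq : ∀ a ∈ s, ∀ t : Set ℂ, IsOpen t → a ∈ t → (∀ b ∈ s, b ∈ t → b = a) →
      G =ᶠ[𝓝 a] Function.update g a (limUnder (𝓝[≠] a) g) := by
    intro a ha t hto hat hta
    filter_upwards [hto.mem_nhds hat] with w hw
    by_cases hws : w ∈ s
    · have hwa : w = a := hta w hws hw
      subst hwa
      simp [hGdef, hws, Function.update_self]
    · have hwa : w ≠ a := fun h => hws (h ▸ ha)
      simp [hGdef, hws, Function.update_of_ne hwa]
  have hcontS : ∀ a ∈ s, ContinuousAt G a := by
    intro a ha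
    obtain ⟨t, hto, hat, hts, hta⟩ := key a ha
    have hdg : DifferentiableOn ℂ g (t \ {a}) := by
      intro w hw
      have hws : w ∉ s := fun hws => hw.2 (hta w hws hw.1)
      exact (hgd w (Metric.ball_subset_closedBall (hts hw.1)) hws).differentiableWithinAt
    have hupd := Complex.differentiableOn_update_limUnder_of_isLittleO
      (hto.mem_nhds hat) hdg (ho a ha)
    have hcu : ContinuousAt (Function.update g a (limUnder (𝓝[≠] a) g)) a :=
      (hupd.differentiableAt (hto.mem_nhds hat)).continuousAt
    exact hcu.congr (hGeq a ha t hto hat hta).symm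
  have hGg : ∀ w, w ∉ s → G =ᶠ[𝓝 w] g := by
    intro w hws
    have : ∀ᶠ u in 𝓝 w, u ∈ (↑s : Set ℂ)ᶜ :=
      s.finite_toSet.isClosed.isOpen_compl.mem_nhds hws
    filter_upwards [this] with u hu
    have hu' : u ∉ s := hu
    simp [hGdef, hu']
  have hcont : ContinuousOn G (Metric.closedBall (0:ℂ) R) := by
    intro w hw
    by_cases hws : w ∈ s
    · exact (hcontS w hws).continuousWithinAt
    · exact (((hgd w hw hws).continuousAt).congr (hGg w hws).symm).continuousWithinAt
  have hGdiff : ∀ w ∈ Metric.ball (0:ℂ) R \ (↑s : Set ℂ), DifferentiableAt ℂ G w := by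
    intro w hw
    have := hgd w (Metric.ball_subset_closedBall hw.1) hw.2
    exact this.congr_of_eventuallyEq (hGg w hw.2)
  have hzero : (∮ w in C(0, R), G w) = 0 :=
    circleIntegral_eq_zero_of_differentiable_on_off_countable hR.le s.countable_toSet
      hcont hGdiff
  have hsphere : ∀ w ∈ Metric.sphere (0:ℂ) R, w ∉ s := by
    intro w hw hws
    have h1 := Metric.mem_ball.1 (hs w hws)
    have h2 := Metric.mem_sphere.1 hw
    rw [h2] at h1
    exact lt_irrefl _ h1
  have hfeq : Set.EqOn f (fun w => G w + ∑ a ∈ s, c a * (w - a)⁻¹) (Metric.sphere (0:ℂ) R) := by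
    intro w hw
    have hws := hsphere w hw
    simp only [hGdef, if_neg hws, hgdef]
    ring
  have hint2 : ∀ a ∈ s, CircleIntegrable (fun w => c a * (w - a)⁻¹) 0 R := by
    intro a ha
    apply ContinuousOn.circleIntegrable hR.le
    apply continuousOn_const.mul
    apply ContinuousOn.inv₀ ((continuousOn_id.sub continuousOn_const))
    intro w hw
    exact sub_ne_zero.2 fun h => hsphere w hw ((show w = a from h) ▸ ha)
  have hint3 : CircleIntegrable (fun w => ∑ a ∈ s, c a * (w - a)⁻¹) 0 R :=
    aux_circleIntegrable_sum s _ 0 R hint2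
  have hint1 : CircleIntegrable G 0 R :=
    ContinuousOn.circleIntegrable hR.le (hcont.mono Metric.sphere_subset_closedBall)
  calc (∮ w in C(0, R), f w)
      = ∮ w in C(0, R), (G w + ∑ a ∈ s, c a * (w - a)⁻¹) :=
        circleIntegral.integral_congr hR.le hfeq
    _ = (∮ w in C(0, R), G w) + ∮ w in C(0, R), ∑ a ∈ s, c a * (w - a)⁻¹ :=
        aux_circleIntegral_add hint1 hint3
    _ = ∑ a ∈ s, ∮ w in C(0, R), c a * (w - a)⁻¹ := by
        rw [hzero, zero_add, aux_circleIntegral_sum s _ 0 R hint2]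
    _ = ∑ a ∈ s, c a * (2 * Real.pi * Complex.I) := by
        refine Finset.sum_congr rfl fun a ha => ?_
        rw [circleIntegral.integral_const_mul,
          circleIntegral.integral_sub_inv_of_mem_ball (hs a ha)]
    _ = (2 * Real.pi * Complex.I) * ∑ a ∈ s, c a := by
        rw [← Finset.sum_mul, mul_comm]

/-- If the logarithmic derivative of `G` is bounded by `C / R_N` on the circles `|ω| = R_N`,
then `∑_{|p_n|<R_N} 1/p_n − ∑_{|z_n|<R_N} 1/z_n` converges as `N → ∞` to `G'(0)/G(0)`. -/
theorem stmt_5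
    (G : ℂ → ℂ) (z p ρ : ℕ → ℂ) (R : ℕ → ℝ) (C : ℝ)
    (hz_inj : Function.Injective z) (hp_inj : Function.Injective p)
    (hz0 : ∀ n, z n ≠ 0) (hp0 : ∀ n, p n ≠ 0)
    (hdisj : ∀ n m, z n ≠ p m)
    (hzfin : ∀ r : ℝ, {n : ℕ | ‖z n‖ < r}.Finite)
    (hpfin : ∀ r : ℝ, {n : ℕ | ‖p n‖ < r}.Finite)
    (hdiff : ∀ w : ℂ, w ∉ Set.range p → DifferentiableAt ℂ G w)
    (hzero_iff : ∀ w : ℂ, G w = 0 ↔ ∃ n, w = z n)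
    (hzsimple : ∀ n, deriv G (z n) ≠ 0)
    (hres : ∀ n, ρ n ≠ 0 ∧ Tendsto (fun w => (w - p n) * G w) (𝓝[≠] p n) (𝓝 (ρ n)))
    (hRpos : ∀ N, 0 < R N) (hRmono : StrictMono R) (hRtop : Tendsto R atTop atTop)
    (hRavoid : ∀ n N, ‖z n‖ ≠ R N ∧ ‖p n‖ ≠ R N)
    (hC : 0 < C)
    (hbound : ∀ N, ∀ w : ℂ, ‖w‖ = R N →
      ‖deriv G w / G w‖ ≤ C / R N) :
    Tendsto (fun N =>
        (∑ n ∈ (hpfin (R N)).toFinset, 1 / p n) - ∑ n ∈ (hzfin (R N)).toFinset, 1 / z n)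
      atTop (𝓝 (deriv G 0 / G 0)) := by
  classical
  set U : Set ℂ := (Set.range p)ᶜ with hUdef
  have hUopen : IsOpen U := aux_isOpen_compl p hpfin
  have hGdiffU : DifferentiableOn ℂ G U := fun w hw => (hdiff w hw).differentiableWithinAt
  have hderivG : ∀ w ∈ U, DifferentiableAt ℂ (deriv G) w :=
    fun w hw => aux_deriv_diff hUopen hGdiffU hw
  have h0U : (0:ℂ) ∈ U := by rintro ⟨n, hn⟩; exact hp0 n hn
  have hzU : ∀ n, z n ∈ U := by rintro n ⟨m, hm⟩; exact hdisj n m hm.symm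
  have hG0 : G 0 ≠ 0 := by
    intro h
    obtain ⟨n, hn⟩ := (hzero_iff 0).1 h
    exact hz0 n hn.symm
  have hGp : ∀ n, G (p n) ≠ 0 := by
    intro n h
    obtain ⟨m, hm⟩ := (hzero_iff (p n)).1 h
    exact hdisj m n hm.symm
  set d0 : ℂ := deriv G 0 / G 0 with hd0def
  set c : ℂ → ℂ := fun a => if a = 0 then d0 else if G a = 0 then a⁻¹ else -a⁻¹ with hcdef
  set f : ℂ → ℂ := fun w => deriv G w / G w / w with hfdef
  set sN : ℕ → Finset ℂ := fun N =>
    insert 0 ((hzfin (R N)).toFinset.image z ∪ (hpfin (R N)).toFinset.image p) with hsNdef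
  -- residue computations
  have hres0 : Tendsto (fun w => (w - 0) * f w) (𝓝[≠] (0:ℂ)) (𝓝 d0) := by
    have hcont : ContinuousAt (fun w => deriv G w / G w) 0 :=
      ((hderivG 0 h0U).continuousAt).div (hdiff 0 h0U).continuousAt hG0
    refine Tendsto.congr' ?_ (hcont.tendsto.mono_left nhdsWithin_le_nhds)
    filter_upwards [self_mem_nhdsWithin] with w hw
    have hw0 : w ≠ 0 := hw
    simp only [hfdef, sub_zero]
    field_simp
  have hresz : ∀ n, Tendsto (fun w => (w - z n) * f w) (𝓝[≠] (z n)) (𝓝 ((z n)⁻¹)) := by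
    intro n
    have hGz : G (z n) = 0 := (hzero_iff _).2 ⟨n, rfl⟩
    have hd' : HasDerivAt G (deriv G (z n)) (z n) := (hdiff _ (hzU n)).hasDerivAt
    have hslope : Tendsto (slope G (z n)) (𝓝[≠] z n) (𝓝 (deriv G (z n))) :=
      hasDerivAt_iff_tendsto_slope.1 hd'
    have hinv : Tendsto (fun w => (slope G (z n) w)⁻¹) (𝓝[≠] z n)
        (𝓝 ((deriv G (z n))⁻¹)) := hslope.inv₀ (hzsimple n)
    have hder : Tendsto (deriv G) (𝓝[≠] z n) (𝓝 (deriv G (z n))) :=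
      ((hderivG _ (hzU n)).continuousAt).continuousWithinAt.tendsto
    have hwin : Tendsto (fun w : ℂ => w⁻¹) (𝓝[≠] z n) (𝓝 ((z n)⁻¹)) :=
      ((continuousAt_inv₀ (hz0 n)).continuousWithinAt.tendsto)
    have hprod := (hder.mul hinv).mul hwin
    have hval : deriv G (z n) * (deriv G (z n))⁻¹ * (z n)⁻¹ = (z n)⁻¹ := by
      rw [mul_inv_cancel₀ (hzsimple n), one_mul]
    rw [hval] at hprod
    refine Tendsto.congr' ?_ hprod
    filter_upwards [self_mem_nhdsWithin] with w hw
    have hwa : w - z n ≠ 0 := sub_ne_zero.2 hw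
    simp only [hfdef, slope_def_field, hGz, sub_zero]
    field_simp
  have hresp : ∀ n, Tendsto (fun w => (w - p n) * f w) (𝓝[≠] (p n)) (𝓝 (-(p n)⁻¹)) := by
    intro n
    obtain ⟨hρne, hρ⟩ := hres n
    obtain ⟨ε₁, hε₁, hiso⟩ := aux_isolated p hpfin (p n)
    set a : ℂ := p n with hadef
    have ha0 : a ≠ 0 := hp0 n
    set H : ℂ → ℂ := fun w => (w - a) * G w with hHdef
    have hHd : DifferentiableOn ℂ H (Metric.ball a ε₁ \ {a}) := by
      intro w hw
      have hwU : w ∈ U := hiso w hw.1 hw.2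
      exact ((differentiableAt_id.sub_const a).mul (hdiff w hwU)).differentiableWithinAt
    have hHa : H a = 0 := by simp [hHdef]
    have ho' : (fun w => H w - H a) =o[𝓝[≠] a] fun w => (w - a)⁻¹ := by
      rw [Asymptotics.isLittleO_iff_tendsto']
      · have h1 : Tendsto (fun w => H w * (w - a)) (𝓝[≠] a) (𝓝 (ρ n * 0)) := by
          refine hρ.mul ?_
          have h2 : Tendsto (fun w : ℂ => w - a) (𝓝[≠] a) (𝓝 (a - a)) :=
            (tendsto_id.sub_const a).mono_left nhdsWithin_le_nhds
          rwa [sub_self] at h2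
        rw [mul_zero] at h1
        refine Tendsto.congr' ?_ h1
        filter_upwards [self_mem_nhdsWithin] with w hw
        have hwa : w - a ≠ 0 := sub_ne_zero.2 hw
        rw [hHa, sub_zero]
        field_simp
      · filter_upwards [self_mem_nhdsWithin] with w hw h0
        exact absurd h0 (inv_ne_zero (sub_ne_zero.2 hw))
    have hball : Metric.ball a ε₁ ∈ 𝓝 a := Metric.ball_mem_nhds a hε₁
    set K : ℂ → ℂ := Function.update H a (limUnder (𝓝[≠] a) H) with hKdef
    have hKd : DifferentiableOn ℂ K (Metric.ball a ε₁) :=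
      Complex.differentiableOn_update_limUnder_of_isLittleO hball hHd ho'
    have hlim : limUnder (𝓝[≠] a) H = ρ n := hρ.limUnder_eq
    have hKa : K a = ρ n := by rw [hKdef, Function.update_self, hlim]
    have hKH : ∀ w, w ≠ a → K w = H w := fun w hw => Function.update_of_ne hw _ _
    have hKcont : ContinuousAt K a := (hKd.differentiableAt hball).continuousAt
    have hK'cont : ContinuousAt (deriv K) a :=
      (aux_deriv_diff Metric.isOpen_ball hKd (Metric.mem_ball_self hε₁)).continuousAt
    -- the limit function
    have hφ : Tendsto (fun w => ((w - a) * deriv K w / K w - 1) * w⁻¹) (𝓝[≠] a)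
        (𝓝 (((a - a) * deriv K a / K a - 1) * a⁻¹)) := by
      have hKane : K a ≠ 0 := by rw [hKa]; exact hρne
      have hcont : ContinuousAt (fun w => ((w - a) * deriv K w / K w - 1) * w⁻¹) a := by
        exact ((((continuousAt_id.sub continuousAt_const).mul hK'cont).div hKcont hKane).sub
          continuousAt_const).mul (continuousAt_inv₀ ha0)
      exact hcont.continuousWithinAt.tendsto
    have hval : ((a - a) * deriv K a / K a - 1) * a⁻¹ = -a⁻¹ := by
      rw [sub_self, zero_mul, zero_div, zero_sub]
      ring
    rw [hval] at hφ
    refine Tendsto.congr' ?_ hφ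
    have hKne : ∀ᶠ w in 𝓝[≠] a, K w ≠ 0 := by
      refine Filter.Eventually.filter_mono nhdsWithin_le_nhds ?_
      have : K a ≠ 0 := by rw [hKa]; exact hρne
      exact hKcont.eventually_ne this
    have hball' : ∀ᶠ w in 𝓝[≠] a, w ∈ Metric.ball a ε₁ :=
      Filter.Eventually.filter_mono nhdsWithin_le_nhds hball
    have hne0 : ∀ᶠ w in 𝓝[≠] a, w ≠ 0 :=
      Filter.Eventually.filter_mono nhdsWithin_le_nhds (eventually_ne_nhds ha0)
    filter_upwards [self_mem_nhdsWithin, hKne, hball', hne0] with w hw hKw hwball hw0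
    have hwa : w - a ≠ 0 := sub_ne_zero.2 hw
    -- G w and deriv G w in terms of K
    have hGeqK : ∀ᶠ u in 𝓝 w, G u = K u * (u - a)⁻¹ := by
      have hopen : IsOpen (Metric.ball a ε₁ \ {a}) :=
        Metric.isOpen_ball.sdiff isClosed_singleton
      filter_upwards [hopen.mem_nhds ⟨hwball, hw⟩] with u hu
      have hua : u - a ≠ 0 := sub_ne_zero.2 hu.2
      rw [hKH u hu.2, hHdef]
      field_simp
    have hGw : G w = K w * (w - a)⁻¹ := hGeqK.self_of_nhds
    have hKder : HasDerivAt K (deriv K w) w :=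
      (hKd.differentiableAt (Metric.isOpen_ball.mem_nhds hwball)).hasDerivAt
    have hinvder : HasDerivAt (fun u : ℂ => (u - a)⁻¹) (-1 / (w - a) ^ 2) w := by
      have := ((hasDerivAt_id w).sub_const a).inv hwa
      exact this
    have hprodder : HasDerivAt (fun u => K u * (u - a)⁻¹)
        (deriv K w * (w - a)⁻¹ + K w * (-1 / (w - a) ^ 2)) w := hKder.mul hinvder
    have hderivGw : deriv G w = deriv K w * (w - a)⁻¹ + K w * (-1 / (w - a) ^ 2) := by
      rw [Filter.EventuallyEq.deriv_eq hGeqK]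
      exact hprodder.deriv
    show ((w - a) * deriv K w / K w - 1) * w⁻¹ = (w - a) * f w
    rw [hfdef]
    simp only []
    rw [hderivGw, hGw]
    field_simp [hwa, hKw, hw0]
    ring
  -- key residue identity for each N
  have hkey : ∀ N, (∮ w in C(0, R N), f w) =
      (2 * Real.pi * Complex.I) * ∑ a ∈ sN N, c a := by
    intro N
    apply aux_residue (hRpos N) (sN N) f c
    · intro a ha
      simp only [hsNdef, Finset.mem_insert, Finset.mem_union, Finset.mem_image,
        Set.Finite.mem_toFinset, Set.mem_setOf_eq] at ha
      rcases ha with rfl | ⟨n, hn, rfl⟩ | ⟨n, hn, rfl⟩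
      · simpa using hRpos N
      · simpa [Complex.dist_eq] using hn
      · simpa [Complex.dist_eq] using hn
    · intro w hw hws
      have hw0 : w ≠ 0 := by
        intro h
        exact hws (by rw [h, hsNdef]; exact Finset.mem_insert_self _ _)
      have habsw : ‖w‖ ≤ R N := by
        simpa [Complex.dist_eq] using Metric.mem_closedBall.1 hw
      have hwU : w ∈ U := by
        rintro ⟨m, hm⟩
        have h1 : ‖p m‖ ≤ R N := by rw [hm]; exact habsw
        have h2 : ‖p m‖ < R N := lt_of_le_of_ne h1 (hRavoid m N).2
        refine hws ?_
        rw [hsNdef, ← hm]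
        exact Finset.mem_insert_of_mem (Finset.mem_union_right _
          (Finset.mem_image_of_mem p ((hpfin (R N)).mem_toFinset.2 h2)))
      have hGw : G w ≠ 0 := by
        intro h
        obtain ⟨m, hm⟩ := (hzero_iff w).1 h
        have h1 : ‖z m‖ < R N :=
          lt_of_le_of_ne (by rw [← hm]; exact habsw) (hRavoid m N).1
        refine hws ?_
        rw [hsNdef, hm]
        exact Finset.mem_insert_of_mem (Finset.mem_union_left _
          (Finset.mem_image_of_mem z ((hzfin (R N)).mem_toFinset.2 h1)))
      exact ((hderivG w hwU).div (hdiff w hwU) hGw).div differentiableAt_fun_id hw0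
    · intro a ha
      simp only [hsNdef, Finset.mem_insert, Finset.mem_union, Finset.mem_image,
        Set.Finite.mem_toFinset, Set.mem_setOf_eq] at ha
      rcases ha with rfl | ⟨n, hn, rfl⟩ | ⟨n, hn, rfl⟩
      · rw [show c 0 = d0 from if_pos rfl]
        exact hres0
      · have hc1 : c (z n) = (z n)⁻¹ := by
          rw [hcdef]
          simp only []
          rw [if_neg (hz0 n), if_pos ((hzero_iff _).2 ⟨n, rfl⟩)]
        rw [hc1]
        exact hresz n
      · have hc2 : c (p n) = -(p n)⁻¹ := by
          rw [hcdef]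
          simp only []
          rw [if_neg (hp0 n), if_neg (hGp n)]
        rw [hc2]
        exact hresp n
  -- computing the sum of residues
  have hcz : ∀ n, c (z n) = (z n)⁻¹ := by
    intro n
    rw [hcdef]
    simp only []
    rw [if_neg (hz0 n), if_pos ((hzero_iff _).2 ⟨n, rfl⟩)]
  have hcp : ∀ n, c (p n) = -(p n)⁻¹ := by
    intro n
    rw [hcdef]
    simp only []
    rw [if_neg (hp0 n), if_neg (hGp n)]
  have hsum : ∀ N, ∑ a ∈ sN N, c a =
      d0 + (∑ n ∈ (hzfin (R N)).toFinset, (z n)⁻¹)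
        - ∑ n ∈ (hpfin (R N)).toFinset, (p n)⁻¹ := by
    intro N
    have h0notin : (0:ℂ) ∉ ((hzfin (R N)).toFinset.image z ∪ ((hpfin (R N)).toFinset.image p)) := by
      intro h
      rcases Finset.mem_union.1 h with h | h
      · obtain ⟨n, -, hn⟩ := Finset.mem_image.1 h
        exact hz0 n hn
      · obtain ⟨n, -, hn⟩ := Finset.mem_image.1 h
        exact hp0 n hn
    have hdisj' : Disjoint ((hzfin (R N)).toFinset.image z) ((hpfin (R N)).toFinset.image p) := by
      rw [Finset.disjoint_left]
      intro a ha hb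
      obtain ⟨n, -, hn⟩ := Finset.mem_image.1 ha
      obtain ⟨m, -, hm⟩ := Finset.mem_image.1 hb
      exact hdisj n m (hn.trans hm.symm)
    rw [hsNdef]
    simp only []
    rw [Finset.sum_insert h0notin, Finset.sum_union hdisj',
      Finset.sum_image (fun x _ y _ h => hz_inj h),
      Finset.sum_image (fun x _ y _ h => hp_inj h),
      show c 0 = d0 from if_pos rfl,
      Finset.sum_congr rfl (fun n _ => hcz n),
      Finset.sum_congr rfl (fun n _ => hcp n)]
    rw [Finset.sum_neg_distrib]
    ring
  -- bounding the circle integral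
  have hIbound : ∀ N, ‖(∮ w in C(0, R N), f w)‖ ≤ 2 * Real.pi * C / R N := by
    intro N
    have h1 : ∀ w ∈ Metric.sphere (0:ℂ) (R N), ‖f w‖ ≤ C / (R N) ^ 2 := by
      intro w hw
      have habsw : ‖w‖ = R N := by
        simpa [Complex.dist_eq] using Metric.mem_sphere.1 hw
      have hb := hbound N w habsw
      have hnorm : ‖f w‖ = ‖deriv G w / G w‖ * (‖w‖)⁻¹ := by
        rw [hfdef]
        simp only [norm_div]
        ring
      rw [hnorm, habsw]
      calc ‖deriv G w / G w‖ * (R N)⁻¹ ≤ (C / R N) * (R N)⁻¹ :=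
            mul_le_mul_of_nonneg_right hb (inv_nonneg.2 (hRpos N).le)
        _ = C / (R N) ^ 2 := by
            have hRne : R N ≠ 0 := (hRpos N).ne'
            rw [sq, ← div_div, div_eq_mul_inv (C / R N)]
    have h2 := circleIntegral.norm_integral_le_of_norm_le_const (hRpos N).le h1
    calc ‖(∮ w in C(0, R N), f w)‖ ≤ 2 * Real.pi * R N * (C / (R N) ^ 2) := h2
      _ = 2 * Real.pi * C / R N := by
          have hRne : R N ≠ 0 := (hRpos N).ne'
          field_simp
  have hIlim : Tendsto (fun N => (∮ w in C(0, R N), f w)) atTop (𝓝 0) := by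
    refine squeeze_zero_norm hIbound ?_
    exact Tendsto.div_atTop tendsto_const_nhds hRtop
  have h2πI : (2 * (Real.pi:ℂ) * Complex.I : ℂ) ≠ 0 := by
    simp [Real.pi_ne_zero, Complex.I_ne_zero]
  have hfinal : ∀ N,
      (∑ n ∈ (hpfin (R N)).toFinset, 1 / p n) - ∑ n ∈ (hzfin (R N)).toFinset, 1 / z n
      = d0 - (∮ w in C(0, R N), f w) / (2 * Real.pi * Complex.I) := by
    intro N
    rw [hkey N, hsum N]
    rw [mul_div_cancel_left₀ _ h2πI]
    simp only [one_div]
    ring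
  have hT : Tendsto (fun N => d0 - (∮ w in C(0, R N), f w) / (2 * Real.pi * Complex.I))
      atTop (𝓝 (d0 - 0 / (2 * Real.pi * Complex.I))) :=
    tendsto_const_nhds.sub (hIlim.div_const _)
  rw [zero_div, sub_zero] at hT
  exact hT.congr (fun N => (hfinal N).symm)
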